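/- Continued-fraction continuant identity for the classical q-tangent: define polynomials over Q(q) by p_0(z)=0, p_1(z)=z, q_0(z)=1, q_1(z)=a_1, and p_n(z)=a_n p_{n-1}(z) - z^2 p_{n-2}(z), q_n(z)=a_n q_{n-1}(z) - z^2 q_{n-2}(z), where a_n = [2n-1]_q q^(1-n). Then for all n ≥ 0 and all k ≤ 2n, the coefficient of z^k in p_n(z)·cos_q(z) - q_n(z)·sin_q(z) is zero, where sin_q(z) = sum (-1)^m z^(2m+1)/[2m+1]_q! and cos_q(z) = sum (-1)^m z^(2m)/[2m]_q!. -/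

import Mathlib

noncomputable section
open Finset PowerSeries

abbrev Fq : Type := RatFunc ℚ

/-- The variable `q` as element of the field of rational functions `ℚ(q)`. -/
def qv : Fq := RatFunc.X

/-- The q-integer `[m]_q = 1 + q + ... + q^(m-1)`. -/
def qInt (x : Fq) (m : ℕ) : Fq := ∑ i ∈ Finset.range m, x ^ i

/-- The q-factorial `[m]_q! = [1]_q [2]_q ⋯ [m]_q`. -/
def qFact (x : Fq) (m : ℕ) : Fq := ∏ i ∈ Finset.range m, qInt x (i + 1)

/-- Jackson's `sin_q(z)`. -/
def jsin : PowerSeries Fq :=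
  PowerSeries.mk fun m => if m % 2 = 1 then (-1 : Fq) ^ (m / 2) / qFact qv m else 0

/-- Jackson's `cos_q(z)`. -/
def jcos : PowerSeries Fq :=
  PowerSeries.mk fun m => if m % 2 = 0 then (-1 : Fq) ^ (m / 2) / qFact qv m else 0

/-- The partial quotients `a_n = [2n-1]_q q^(1-n)` of the continued fraction. -/
def a (n : ℕ) : Fq := qInt qv (2 * n - 1) * qv ^ ((1 : ℤ) - (n : ℤ))

/-- Numerator continuants `p_n`. -/
def pp : ℕ → Polynomial Fq
  | 0 => 0
  | 1 => Polynomial.X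
  | n + 2 => Polynomial.C (a (n + 2)) * pp (n + 1) - Polynomial.X ^ 2 * pp n

/-- Denominator continuants `q_n`. -/
def qq : ℕ → Polynomial Fq
  | 0 => 1
  | 1 => Polynomial.C (a 1)
  | n + 2 => Polynomial.C (a (n + 2)) * qq (n + 1) - Polynomial.X ^ 2 * qq n

/-! ### Auxiliary machinery -/

/-- The product `∏_{i<n} [2m+2i+3]_q`. -/
def Pden (n m : ℕ) : Fq := ∏ i ∈ Finset.range n, qInt qv (2*m+2*i+3)

/-- Coefficient of `z^(2m+2n+1)` in the remainder `q_n sin_q - p_n cos_q`. -/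
def cc (n m : ℕ) : Fq :=
  (-1) ^ m * qv ^ (n*(n+1)/2) / (qFact qv (2*m+1) * Pden n m)

/-- The full coefficient function of the remainder. -/
def rr (n k : ℕ) : Fq :=
  if k % 2 = 1 ∧ 2*n+1 ≤ k then cc n ((k - (2*n+1))/2) else 0

lemma qv_ne_zero : qv ≠ 0 := RatFunc.X_ne_zero

lemma qInt_algebraMap (m : ℕ) :
    qInt qv m = algebraMap (Polynomial ℚ) Fq (∑ i ∈ Finset.range m, Polynomial.X ^ i) := by
  rw [qInt, map_sum]
  refine Finset.sum_congr rfl fun i _ => ?_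
  rw [map_pow, RatFunc.algebraMap_X, qv]

lemma qInt_ne_zero (m : ℕ) : qInt qv (m+1) ≠ 0 := by
  rw [qInt_algebraMap]
  apply RatFunc.algebraMap_ne_zero
  intro h
  have h2 := congrArg (Polynomial.eval 1) h
  simp [Polynomial.eval_finset_sum] at h2
  have h3 : (m+1 : ℕ) = (0 : ℕ) := by exact_mod_cast h2
  omega

lemma qFact_succ (x : Fq) (m : ℕ) : qFact x (m+1) = qFact x m * qInt x (m+1) :=
  Finset.prod_range_succ _ _

lemma qFact_ne_zero (m : ℕ) : qFact qv m ≠ 0 := by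
  rw [qFact]
  exact Finset.prod_ne_zero_iff.2 fun i _ => qInt_ne_zero i

lemma Pden_ne_zero (n m : ℕ) : Pden n m ≠ 0 := by
  rw [Pden]
  refine Finset.prod_ne_zero_iff.2 fun i _ => ?_
  have h : 2*m+2*i+3 = (2*m+2*i+2)+1 := rfl
  rw [h]; exact qInt_ne_zero _

lemma qInt_one : qInt qv 1 = 1 := by simp [qInt]

lemma qFact_one : qFact qv 1 = 1 := by
  rw [qFact]; simp [qInt_one]

lemma qInt_succ (n : ℕ) : qInt qv (n+1) = qInt qv n + qv ^ n := by
  rw [qInt, qInt, Finset.sum_range_succ]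

lemma qInt_add (s t : ℕ) : qInt qv (s + t) = qInt qv s + qv ^ s * qInt qv t := by
  induction t with
  | zero => simp [qInt]
  | succ t ih =>
      have h1 : s + (t+1) = (s+t)+1 := rfl
      rw [h1, qInt_succ, ih, qInt_succ t, pow_add]
      ring

lemma qInt_succ' (n : ℕ) : qInt qv (n+1) = 1 + qv * qInt qv n := by
  rw [show n+1 = 1+n by ring, qInt_add, qInt_one, pow_one]

lemma Pden_succ (n m : ℕ) : Pden (n+1) m = Pden n m * qInt qv (2*m+2*n+3) :=
  Finset.prod_range_succ _ _

lemma Pden_succ' (n m : ℕ) : Pden (n+1) m = qInt qv (2*m+3) * Pden n (m+1) := by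
  have h2 : ∀ i ∈ Finset.range n, qInt qv (2*m+2*(i+1)+3) = qInt qv (2*(m+1)+2*i+3) :=
    fun i _ => by rw [show 2*m+2*(i+1)+3 = 2*(m+1)+2*i+3 by ring]
  calc Pden (n+1) m
      = (∏ i ∈ Finset.range n, qInt qv (2*m+2*(i+1)+3)) * qInt qv (2*m+2*0+3) := by
        rw [Pden, Finset.prod_range_succ']
    _ = qInt qv (2*m+3) * Pden n (m+1) := by
        rw [Finset.prod_congr rfl h2, mul_comm, show 2*m+2*0+3 = 2*m+3 by ring, Pden]

lemma a_succ_succ (n : ℕ) :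
    a (n+2) = qInt qv (2*n+3) * (qv ^ (n+1))⁻¹ := by
  have h1 : 2*(n+2)-1 = 2*n+3 := by omega
  rw [a, h1, show ((1:ℤ) - ((n+2 : ℕ) : ℤ)) = -((n+1 : ℕ) : ℤ) by push_cast; ring,
    zpow_neg, zpow_natCast]

lemma half_step (n : ℕ) : (n+1)*(n+2)/2 = n*(n+1)/2 + (n+1) := by
  obtain ⟨j, hj⟩ := Nat.even_mul_succ_self n
  have h2 : (n+1)*(n+2) = n*(n+1) + 2*(n+1) := by ring
  omega

lemma half_step2 (n : ℕ) : (n+2)*(n+3)/2 = n*(n+1)/2 + (2*n+3) := by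
  obtain ⟨j, hj⟩ := Nat.even_mul_succ_self n
  have h2 : (n+2)*(n+3) = n*(n+1) + 2*(2*n+3) := by ring
  omega

/-- Key identity (A): `a (n+2) * cc (n+1) 0 = cc n 0`. -/
lemma keyA (n : ℕ) : a (n+2) * cc (n+1) 0 - cc n 0 = 0 := by
  have e0 : 2*0+2*n+3 = 2*n+3 := by omega
  have hP : Pden (n+1) 0 = Pden n 0 * qInt qv (2*n+3) := by
    rw [Pden_succ, e0]
  rw [cc, cc, a_succ_succ, hP, half_step, pow_add qv (n*(n+1)/2) (n+1)]
  have h1 : qInt qv (2*n+3) ≠ 0 := by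
    rw [show 2*n+3 = (2*n+2)+1 from rfl]; exact qInt_ne_zero _
  have h3 := Pden_ne_zero n 0
  have h4 : qFact qv (2*0+1) ≠ 0 := qFact_ne_zero _
  have h5 : qv ^ (n+1) ≠ 0 := pow_ne_zero _ qv_ne_zero
  have h6 : qv ^ (n*(n+1)/2) ≠ 0 := pow_ne_zero _ qv_ne_zero
  set B := qInt qv (2*n+3) with hB
  set P := Pden n 0 with hPP
  set F := qFact qv (2*0+1) with hF
  set V := qv ^ (n+1) with hV
  set E := qv ^ (n*(n+1)/2) with hE
  clear_value B P F V E
  field_simp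
  ring

lemma keyField (m : ℕ) (C W A E V F B P D : Fq)
    (h1 : A ≠ 0) (h2 : B ≠ 0) (h6 : P ≠ 0) (h7 : F ≠ 0)
    (h8 : V ≠ 0) (h11 : D ≠ 0) (hD : C + W * A = D) :
    C * V⁻¹ * ((-1) ^ (m + 1) * (E * V) / (F * A * B * (P * D))) - (-1) ^ (m + 1) * E / (F * A * B * P) =
    (-1) ^ m * (E * W) / (F * (B * (P * D))) := by
  have hV' : V⁻¹ * V = 1 := inv_mul_cancel₀ h8
  have hstep : C * V⁻¹ * ((-1) ^ (m+1) * (E * V) / (F * A * B * (P * D)))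
      = C * (-1) ^ (m+1) * E * (V⁻¹ * V) / (F * A * B * (P * D)) := by
    ring
  rw [hstep, hV', mul_one]
  rw [div_sub_div _ _ (by simp [h7,h1,h2,h6,h11] : F * A * B * (P * D) ≠ 0)
      (by simp [h7,h1,h2,h6] : F * A * B * P ≠ 0),
    div_eq_div_iff (by simp [h7,h1,h2,h6,h11] : F * A * B * (P * D) * (F * A * B * P) ≠ 0)
      (by simp [h7,h2,h6,h11] : F * (B * (P * D)) ≠ 0)]
  rw [← hD]
  ring

/-- Key identity (B): `cc (n+2) m = a (n+2) * cc (n+1) (m+1) - cc n (m+1)`. -/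
lemma keyB (n m : ℕ) : a (n+2) * cc (n+1) (m+1) - cc n (m+1) = cc (n+2) m := by
  have hF : qFact qv (2*(m+1)+1) = qFact qv (2*m+1) * qInt qv (2*m+2) * qInt qv (2*m+3) := by
    rw [show 2*(m+1)+1 = (2*m+2)+1 by ring, qFact_succ, show (2*m+2) = (2*m+1)+1 from rfl,
      qFact_succ]
  have hP2 : Pden (n+2) m = qInt qv (2*m+3) * (Pden n (m+1) * qInt qv (2*(m+1)+2*n+3)) := by
    rw [Pden_succ', Pden_succ]
  have hPn1 : Pden (n+1) (m+1) = Pden n (m+1) * qInt qv (2*(m+1)+2*n+3) := Pden_succ n (m+1)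
  rw [cc, cc, cc, a_succ_succ, hF, hP2, hPn1, half_step, half_step2,
    pow_add qv (n*(n+1)/2) (n+1), pow_add qv (n*(n+1)/2) (2*n+3)]
  refine keyField m _ _ _ _ _ _ _ _ _ ?_ ?_ ?_ ?_ ?_ ?_ ?_
  · rw [show 2*m+2 = (2*m+1)+1 from rfl]; exact qInt_ne_zero _
  · rw [show 2*m+3 = (2*m+2)+1 from rfl]; exact qInt_ne_zero _
  · exact Pden_ne_zero n (m+1)
  · exact qFact_ne_zero (2*m+1)
  · exact pow_ne_zero _ qv_ne_zero
  · rw [show 2*(m+1)+2*n+3 = (2*(m+1)+2*n+2)+1 by ring]; exact qInt_ne_zero _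
  · rw [show 2*(m+1)+2*n+3 = (2*n+3) + (2*m+2) by ring]
    exact (qInt_add (2*n+3) (2*m+2)).symm

/-- Key identity (C): the base case `n = 1`. -/
lemma keyCField (m : ℕ) (q A F B : Fq)
    (hA : A ≠ 0) (hF : F ≠ 0) (hB : B ≠ 0) (hrel : 1 + q * A = B) :
    (-1 : Fq) ^ (m+1) / (F * A * B) - (-1 : Fq) ^ (m+1) / (F * A) = (-1 : Fq) ^ m * q / (F * B) := by
  rw [div_sub_div _ _ (by simp [hF,hA,hB] : F * A * B ≠ 0) (by simp [hF,hA] : F * A ≠ 0),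
    div_eq_div_iff (by simp [hF,hA,hB] : F * A * B * (F * A) ≠ 0) (by simp [hF,hB] : F * B ≠ 0)]
  rw [← hrel]
  ring

lemma keyC (m : ℕ) :
    (-1 : Fq) ^ (m+1) / qFact qv (2*m+3) - (-1 : Fq) ^ (m+1) / qFact qv (2*m+2) = cc 1 m := by
  have hF2 : qFact qv (2*m+2) = qFact qv (2*m+1) * qInt qv (2*m+2) := by
    rw [show (2*m+2) = (2*m+1)+1 from rfl, qFact_succ]
  have hF3 : qFact qv (2*m+3) = qFact qv (2*m+1) * qInt qv (2*m+2) * qInt qv (2*m+3) := by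
    rw [show (2*m+3) = (2*m+2)+1 from rfl, qFact_succ, hF2]
  have hP : Pden 1 m = qInt qv (2*m+3) := by
    rw [Pden, Finset.prod_range_one, show 2*m+2*0+3 = 2*m+3 by ring]
  have h1 : qInt qv (2*m+2) ≠ 0 := by
    rw [show 2*m+2 = (2*m+1)+1 from rfl]; exact qInt_ne_zero _
  have h2 : qInt qv (2*m+3) ≠ 0 := by
    rw [show 2*m+3 = (2*m+2)+1 from rfl]; exact qInt_ne_zero _
  have h7 := qFact_ne_zero (2*m+1)
  rw [cc, hP, hF2, hF3, show (1*(1+1)/2 : ℕ) = 1 from rfl, pow_one]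
  exact keyCField m qv _ _ _ h1 h7 h2 (by
    rw [show (2*m+3) = (2*m+2)+1 from rfl]
    exact (qInt_succ' (2*m+2)).symm)

lemma rr_eq_zero {n k : ℕ} (h : k % 2 = 0 ∨ k < 2*n+1) : rr n k = 0 := by
  rw [rr, if_neg]
  rintro ⟨h1, h2⟩
  rcases h with h | h
  · omega
  · omega

lemma rr_eq (n m : ℕ) : rr n (2*m+2*n+1) = cc n m := by
  rw [rr, if_pos]
  · congr 1; omega
  · constructor <;> omega

lemma coe_sub' (φ ψ : Polynomial Fq) :
    ((φ - ψ : Polynomial Fq) : PowerSeries Fq) = (φ : PowerSeries Fq) - ψ :=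
  map_sub Polynomial.coeToPowerSeries.ringHom φ ψ

/-- Main lemma: the coefficients of the remainder series. -/
lemma key : ∀ n k, PowerSeries.coeff k
    ((qq n : PowerSeries Fq) * jsin - (pp n : PowerSeries Fq) * jcos) = rr n k
  | 0, k => by
    rw [qq, pp]
    simp only [Polynomial.coe_one, Polynomial.coe_zero, one_mul, zero_mul, sub_zero]
    rw [jsin, PowerSeries.coeff_mk]
    by_cases h : k % 2 = 1
    · obtain ⟨m, rfl⟩ : ∃ m, k = 2*m+2*0+1 := ⟨k/2, by omega⟩
      rw [rr_eq, if_pos (by omega), cc]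
      have : (2*m+2*0+1)/2 = m := by omega
      rw [this]
      have hP : Pden 0 m = 1 := by rw [Pden]; simp
      have he : 2*m+2*0+1 = 2*m+1 := by ring
      rw [hP, he]
      simp
    · rw [if_neg h, rr_eq_zero (Or.inl (by omega))]
  | 1, k => by
    rw [qq, pp]
    have ha1 : a 1 = 1 := by
      rw [a]
      norm_num
      exact qInt_one
    rw [ha1]
    simp only [Polynomial.coe_C, Polynomial.coe_X, Polynomial.coe_one, map_one, one_mul]
    rw [map_sub]
    by_cases h : k % 2 = 1
    · rcases Nat.lt_or_ge k 3 with hk | hk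
      · have hk1 : k = 1 := by omega
        subst hk1
        rw [PowerSeries.coeff_succ_X_mul]
        rw [jsin, jcos, PowerSeries.coeff_mk, PowerSeries.coeff_mk]
        rw [rr_eq_zero (Or.inr (by omega))]
        norm_num
        rw [qFact_one, qFact]
        simp
      · obtain ⟨m, rfl⟩ : ∃ m, k = 2*m+2*1+1 := ⟨(k-3)/2, by omega⟩
        rw [rr_eq]
        have e : 2*m+2*1+1 = (2*m+2)+1 := by ring
        rw [e, PowerSeries.coeff_succ_X_mul]
        rw [jsin, jcos, PowerSeries.coeff_mk, PowerSeries.coeff_mk]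
        rw [if_pos (by omega), if_pos (by omega)]
        have e1 : ((2*m+2)+1)/2 = m+1 := by omega
        have e2 : (2*m+2)/2 = m+1 := by omega
        rw [e1, e2]
        have := keyC m
        have e3 : (2*m+2)+1 = 2*m+3 := rfl
        rw [e3, this]
    · rw [rr_eq_zero (Or.inl (by omega))]
      rcases Nat.eq_zero_or_pos k with hk | hk
      · subst hk
        rw [PowerSeries.coeff_zero_X_mul]
        rw [jsin, PowerSeries.coeff_mk]
        norm_num
      · obtain ⟨j, rfl⟩ : ∃ j, k = j+1 := ⟨k-1, by omega⟩
        rw [PowerSeries.coeff_succ_X_mul]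
        rw [jsin, jcos, PowerSeries.coeff_mk, PowerSeries.coeff_mk]
        rw [if_neg (by omega), if_neg (by omega)]
        simp
  | n + 2, k => by
    have hrec : ((qq (n+2) : PowerSeries Fq) * jsin - (pp (n+2) : PowerSeries Fq) * jcos)
        = (PowerSeries.C (a (n+2))) *
            ((qq (n+1) : PowerSeries Fq) * jsin - (pp (n+1) : PowerSeries Fq) * jcos)
          - (PowerSeries.X) ^ 2 *
            ((qq n : PowerSeries Fq) * jsin - (pp n : PowerSeries Fq) * jcos) := by
      rw [qq, pp, coe_sub', coe_sub', Polynomial.coe_mul, Polynomial.coe_mul,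
        Polynomial.coe_mul, Polynomial.coe_mul, Polynomial.coe_C, Polynomial.coe_pow,
        Polynomial.coe_X]
      ring
    rw [hrec, map_sub, PowerSeries.coeff_C_mul, key (n+1) k,
      PowerSeries.coeff_X_pow_mul', key n (k-2)]
    by_cases h : k % 2 = 1
    · rcases Nat.lt_or_ge k (2*n+3) with hk | hk
      · -- k too small: everything zero
        rw [rr_eq_zero (Or.inr (by omega)), rr_eq_zero (Or.inr (by omega)),
          rr_eq_zero (n := n+2) (Or.inr (by omega))]
        simp
      · rcases Nat.lt_or_ge k (2*n+5) with hk2 | hk2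
        · -- k = 2n+3
          have hk3 : k = 2*n+3 := by omega
          subst hk3
          have e1 : 2*n+3 = 2*0+2*(n+1)+1 := by ring
          have e2 : 2*n+3-2 = 2*0+2*n+1 := by omega
          rw [rr_eq_zero (n := n+2) (Or.inr (by omega)), if_pos (by omega), e2, rr_eq]
          rw [show rr (n+1) (2*n+3) = cc (n+1) 0 from e1 ▸ rr_eq (n+1) 0]
          exact keyA n
        · -- k = 2m+2n+5
          obtain ⟨m, rfl⟩ : ∃ m, k = 2*m+2*(n+2)+1 := ⟨(k-(2*n+5))/2, by omega⟩
          rw [rr_eq]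
          have e1 : 2*m+2*(n+2)+1 = 2*(m+1)+2*(n+1)+1 := by ring
          have e2 : 2*m+2*(n+2)+1-2 = 2*(m+1)+2*n+1 := by omega
          rw [if_pos (by omega), e2, rr_eq]
          rw [show rr (n+1) (2*m+2*(n+2)+1) = cc (n+1) (m+1) from e1 ▸ rr_eq (n+1) (m+1)]
          exact keyB n m
    · rw [rr_eq_zero (Or.inl (by omega)), rr_eq_zero (n := n+2) (Or.inl (by omega))]
      rcases Nat.lt_or_ge k 2 with hk | hk
      · rw [if_neg (by omega)]
        simp
      · rw [if_pos hk, rr_eq_zero (Or.inl (by omega))]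
        simp

theorem continuant_approximation (n : ℕ) (k : ℕ) (hk : k ≤ 2 * n) :
    PowerSeries.coeff k
      ((pp n : PowerSeries Fq) * jcos - (qq n : PowerSeries Fq) * jsin) = 0 := by
  have h := key n k
  have e : (pp n : PowerSeries Fq) * jcos - (qq n : PowerSeries Fq) * jsin
      = -((qq n : PowerSeries Fq) * jsin - (pp n : PowerSeries Fq) * jcos) := by ring
  rw [e, map_neg, h, rr_eq_zero (Or.inr (by omega)), neg_zero]
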